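/- Let C be an MRD-code in 𝔽_q^{m×n} with minimum distance d, m ≤ n, containing the zero matrix. Then for every l with 0 ≤ l ≤ m - d, there exists a matrix C₀ ∈ C with rank(C₀) = d + l. -/

import Mathlib

set_option linter.unusedSectionVars false
set_option linter.unusedVariables false
set_option maxHeartbeats 1000000

open Finset Module
open scoped Classical

section MRDaux

variable {m n : ℕ} {Fq : Type*} [Field Fq] [Fintype Fq]

lemma rank_le_of_rows_mem_span (A : Matrix (Fin m) (Fin n) Fq) (t : Finset (Fin n → Fq))
    (h : ∀ i, A i ∈ Submodule.span Fq (t : Set (Fin n → Fq))) : A.rank ≤ t.card := by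
  classical
  have hsub : Submodule.span Fq (Set.range A) ≤ Submodule.span Fq (t : Set (Fin n → Fq)) := by
    rw [Submodule.span_le]
    rintro _ ⟨i, rfl⟩
    exact h i
  have h3 := Submodule.finrank_mono (R := Fq) hsub
  have h2 : ((t : Set (Fin n → Fq))).finrank Fq ≤ t.card :=
    finrank_span_finset_le_card _
  rw [Set.finrank] at h2
  rw [Matrix.rank_eq_finrank_span_row]
  exact le_trans h3 h2

lemma rank_le_of_rows_subset (A : Matrix (Fin m) (Fin n) Fq) (s : Finset (Fin m))
    (h : ∀ i, i ∉ s → A i = 0) : A.rank ≤ s.card := by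
  classical
  refine le_trans (rank_le_of_rows_mem_span A (s.image A) ?_) Finset.card_image_le
  intro i
  by_cases hi : i ∈ s
  · apply Submodule.subset_span
    simp only [Finset.coe_image, Set.mem_image, Finset.mem_coe]
    exact Finset.mem_image.mpr ⟨i, hi, rfl⟩
  · rw [h i hi]; exact Submodule.zero_mem _

lemma card_vanish (T R : Finset (Fin m)) (hRT : R ⊆ T) :
    (Finset.univ.filter (fun g : ↥T → (Fin n → Fq) =>
        ∀ i : ↥T, (i : Fin m) ∈ R → g i = 0)).card
      = (Fintype.card Fq) ^ (n * (T.card - R.card)) := by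
  classical
  set Φ : (↥(T \ R) → (Fin n → Fq)) → (↥T → (Fin n → Fq)) :=
    fun g i => if h : (i : Fin m) ∈ R then 0
      else g ⟨i, Finset.mem_sdiff.mpr ⟨i.2, h⟩⟩ with hΦ
  have hΦinj : Function.Injective Φ := by
    intro g₁ g₂ h
    funext i
    have hi := Finset.mem_sdiff.mp i.2
    have := congrFun h ⟨i.1, hi.1⟩
    simpa [hΦ, hi.2] using this
  have himg : Finset.univ.image Φ =
      Finset.univ.filter (fun g : ↥T → (Fin n → Fq) =>
        ∀ i : ↥T, (i : Fin m) ∈ R → g i = 0) := by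
    ext f
    simp only [Finset.mem_image, Finset.mem_filter, Finset.mem_univ, true_and]
    constructor
    · rintro ⟨g, -, rfl⟩ i hi
      simp [hΦ, hi]
    · intro hf
      refine ⟨fun i => f ⟨i.1, (Finset.mem_sdiff.mp i.2).1⟩, ?_⟩
      funext i
      by_cases hi : (i : Fin m) ∈ R
      · simp [hΦ, hi, hf i hi]
      · simp [hΦ, hi]
  rw [← himg, Finset.card_image_of_injective _ hΦinj, Finset.card_univ,
    Fintype.card_fun, Fintype.card_fun, Fintype.card_coe, Fintype.card_fin,
    Finset.card_sdiff_of_subset hRT, ← pow_mul]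

lemma MRD_master (q d : ℕ) (hq : Fintype.card Fq = q) (hd1 : 1 ≤ d) (hdm : d ≤ m)
    (CF : Finset (Matrix (Fin m) (Fin n) Fq))
    (hdist : ∀ A ∈ CF, ∀ B ∈ CF, A ≠ B → d ≤ (A - B).rank)
    (hcard : CF.card = q ^ (n * (m - d + 1)))
    (x : Fin m → Fq) (T : Finset (Fin m)) (hT : T.card = m - d)
    (j : Fin m) (hj : j ∉ T) (hxj : x j ≠ 0)
    (Z : Finset ((Fin n → Fq) × (↥T → Fin n → Fq))) :
    (CF.filter (fun A =>
      ((Matrix.vecMul x A, fun (i : ↥T) (c : Fin n) => A i c) :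
        (Fin n → Fq) × (↥T → Fin n → Fq)) ∈ Z)).card = Z.card := by
  classical
  set π : Matrix (Fin m) (Fin n) Fq → (Fin n → Fq) × (↥T → Fin n → Fq) :=
    fun A => (Matrix.vecMul x A, fun i c => A i c) with hπ
  -- injectivity on CF
  have hinj : Set.InjOn π (CF : Set _) := by
    intro A hA B hB hAB
    by_contra hne
    have hd' : d ≤ (A - B).rank := hdist A hA B hB hne
    set D : Matrix (Fin m) (Fin n) Fq := A - B with hD
    have h1 : Matrix.vecMul x D = 0 := by
      rw [hD, Matrix.vecMul_sub]
      have := congrArg Prod.fst hAB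
      simp only [hπ] at this
      rw [this, sub_self]
    have h2 : ∀ i : Fin m, i ∈ T → D i = 0 := by
      intro i hi
      have := congrArg Prod.snd hAB
      simp only [hπ] at this
      have := congrFun this ⟨i, hi⟩
      funext c
      have h5 := congrFun this c
      simp only [hD, Matrix.sub_apply, Pi.zero_apply]
      simp only at h5
      rw [h5, sub_self]
    -- the linear relation among rows
    have hsum : ∑ i : Fin m, x i • D i = 0 := by
      funext c
      rw [Finset.sum_apply]
      have := congrFun h1 c
      simpa [Matrix.vecMul, dotProduct, smul_eq_mul] using this
    set gens : Finset (Fin n → Fq) := ((Finset.univ \ T).erase j).image D with hgens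
    have hrows : ∀ i, D i ∈ Submodule.span Fq (gens : Set (Fin n → Fq)) := by
      have hmem : ∀ i : Fin m, i ∉ T → i ≠ j → D i ∈ Submodule.span Fq (gens : Set (Fin n → Fq)) := by
        intro i hiT hij
        apply Submodule.subset_span
        simp only [hgens, Finset.coe_image, Set.mem_image, Finset.mem_coe]
        exact Finset.mem_image.mpr ⟨i, Finset.mem_erase.mpr ⟨hij, Finset.mem_sdiff.mpr ⟨Finset.mem_univ _, hiT⟩⟩, rfl⟩
      intro i
      by_cases hiT : i ∈ T
      · rw [h2 i hiT]; exact Submodule.zero_mem _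
      by_cases hij : i = j
      · subst hij
        have hrel : x i • D i = -∑ k ∈ Finset.univ.erase i, x k • D k := by
          rw [eq_neg_iff_add_eq_zero, add_comm]
          rw [Finset.sum_erase_add _ _ (Finset.mem_univ i)] at *
          exact hsum
        have hmem2 : (∑ k ∈ Finset.univ.erase i, x k • D k) ∈
            Submodule.span Fq (gens : Set (Fin n → Fq)) := by
          apply Submodule.sum_mem
          intro k hk
          by_cases hkT : k ∈ T
          · rw [h2 k hkT, smul_zero]; exact Submodule.zero_mem _
          · exact Submodule.smul_mem _ _ (hmem k hkT (Finset.mem_erase.mp hk).1)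
        have : D i = (x i)⁻¹ • (x i • D i) := by
          rw [smul_smul, inv_mul_cancel₀ hxj, one_smul]
        rw [this, hrel]
        exact Submodule.smul_mem _ _ (Submodule.neg_mem _ hmem2)
      · exact hmem i hiT hij
    have hrank : D.rank ≤ d - 1 := by
      refine le_trans (rank_le_of_rows_mem_span D gens ?_) ?_
      · exact hrows
      · refine le_trans Finset.card_image_le ?_
        rw [Finset.card_erase_of_mem (Finset.mem_sdiff.mpr ⟨Finset.mem_univ _, hj⟩),
          Finset.card_sdiff_of_subset (Finset.subset_univ _), Finset.card_univ, Fintype.card_fin, hT]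
        omega
    omega
  -- cardinality of target
  have hcardT : Fintype.card ((Fin n → Fq) × (↥T → Fin n → Fq)) =
      q ^ (n * (m - d + 1)) := by
    simp only [Fintype.card_prod, Fintype.card_fun, Fintype.card_coe, Fintype.card_fin, hq, hT]
    rw [← pow_mul, ← pow_add]
    congr 1
    ring
  -- image is everything
  have himg : CF.image π = Finset.univ := by
    apply Finset.eq_univ_of_card
    rw [Finset.card_image_of_injOn hinj, hcard, ← hcardT]
  -- the filtered image is Z
  have hfi : (CF.filter (fun A => π A ∈ Z)).image π = Z := by
    apply Finset.Subset.antisymm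
    · intro z hz
      obtain ⟨A, hA, rfl⟩ := Finset.mem_image.mp hz
      exact (Finset.mem_filter.mp hA).2
    · intro z hz
      have hz2 : z ∈ CF.image π := by rw [himg]; exact Finset.mem_univ z
      obtain ⟨A, hA, rfl⟩ := Finset.mem_image.mp hz2
      exact Finset.mem_image.mpr ⟨A, Finset.mem_filter.mpr ⟨hA, hz⟩, rfl⟩
  calc (CF.filter (fun A => π A ∈ Z)).card
      = ((CF.filter (fun A => π A ∈ Z)).image π).card :=
        (Finset.card_image_of_injOn (hinj.mono (by
          intro a ha
          exact Finset.mem_coe.mpr (Finset.filter_subset _ _ (Finset.mem_coe.mp ha))))).symm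
    _ = Z.card := by rw [hfi]


end MRDaux

/-- an MRD-code containing 0 has codewords of every rank `d + l`,
`0 ≤ l ≤ m - d`. -/
theorem MRD_weight_spectrum
    (q m n d : ℕ) (hmn : m ≤ n) (hd1 : 1 ≤ d) (hdm : d ≤ m)
    (Fq : Type*) [Field Fq] [Fintype Fq] (hq : Fintype.card Fq = q)
    (C : Set (Matrix (Fin m) (Fin n) Fq))
    (hzero : 0 ∈ C)
    (hdist : ∀ A ∈ C, ∀ B ∈ C, A ≠ B → d ≤ (A - B).rank)
    (hMRD : Set.ncard C = q ^ (n * (m - d + 1))) :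
    ∀ l : ℕ, l ≤ m - d → ∃ C₀ ∈ C, Matrix.rank C₀ = d + l := by
  classical
  intro l hl
  have hq2 : 2 ≤ q := by rw [← hq]; exact Fintype.one_lt_card
  set u : ℕ := d + l with hu
  have hum : u ≤ m := by omega
  have hCfin : C.Finite := Set.toFinite C
  set CF : Finset (Matrix (Fin m) (Fin n) Fq) := hCfin.toFinset with hCF
  have hmemCF : ∀ A, A ∈ CF ↔ A ∈ C := fun A => Set.Finite.mem_toFinset _
  have hdistF : ∀ A ∈ CF, ∀ B ∈ CF, A ≠ B → d ≤ (A - B).rank := by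
    intro A hA B hB hne
    exact hdist A ((hmemCF A).mp hA) B ((hmemCF B).mp hB) hne
  have hcardF : CF.card = q ^ (n * (m - d + 1)) := by
    rw [← hMRD, hCF, Set.ncard_eq_toFinset_card _ hCfin]
  -- the sets of row indices
  set Su : Finset (Fin m) := Finset.univ.filter (fun i : Fin m => (i : ℕ) < u) with hSu
  have hSucard : Su.card = u := by
    have himg : Su = Finset.univ.image (Fin.castLE hum) := by
      ext i
      simp only [hSu, Finset.mem_filter, Finset.mem_univ, true_and, Finset.mem_image]
      constructor
      · intro h
        exact ⟨⟨(i : ℕ), h⟩, by ext; simp [Fin.castLE]⟩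
      · rintro ⟨a, -, rfl⟩
        exact a.2
    rw [himg, Finset.card_image_of_injective _ (Fin.castLE_injective hum),
      Finset.card_univ, Fintype.card_fin]
  set R1 : Finset (Fin m) := Finset.univ.filter (fun i : Fin m => u ≤ (i : ℕ)) with hR1
  have hR1card : R1.card = m - u := by
    have hcompl : R1 = Suᶜ := by
      ext i
      simp [hSu, hR1, not_lt]
    rw [hcompl, Finset.card_compl, hSucard, Fintype.card_fin]
  have hR1mem : ∀ i : Fin m, i ∈ R1 ↔ u ≤ (i : ℕ) := by
    intro i; simp [hR1]
  -- the big filter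
  set F1 : Finset (Matrix (Fin m) (Fin n) Fq) :=
    CF.filter (fun A => ∀ i ∈ R1, ∀ c : Fin n, A i c = 0) with hF1
  -- count of F1
  have hF1card : F1.card = q ^ n * q ^ (n * l) := by
    have hj0m : 0 < m := by omega
    set j0 : Fin m := ⟨0, hj0m⟩ with hj0
    have hR1sub : R1 ⊆ Finset.univ.erase j0 := by
      intro i hi
      rw [Finset.mem_erase]
      refine ⟨?_, Finset.mem_univ _⟩
      have hi2 : u ≤ (i : ℕ) := (hR1mem i).mp hi
      intro h
      rw [h] at hi2
      have hj00 : ((j0 : Fin m) : ℕ) = 0 := rfl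
      omega
    obtain ⟨T1, hRT1, hT1sub, hT1card⟩ :=
      Finset.exists_subsuperset_card_eq (n := m - d) hR1sub
        (by rw [hR1card]; omega)
        (by rw [Finset.card_erase_of_mem (Finset.mem_univ _), Finset.card_univ,
              Fintype.card_fin]; omega)
    have hj0T1 : j0 ∉ T1 := fun h => by
      have := hT1sub h
      rw [Finset.mem_erase] at this
      exact this.1 rfl
    set x0 : Fin m → Fq := Pi.single j0 1 with hx0
    have hx0j0 : x0 j0 ≠ 0 := by simp [hx0]
    set Z1 : Finset ((Fin n → Fq) × (↥T1 → Fin n → Fq)) :=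
      (Finset.univ : Finset (Fin n → Fq)) ×ˢ
        (Finset.univ.filter (fun g : ↥T1 → (Fin n → Fq) =>
          ∀ i : ↥T1, (i : Fin m) ∈ R1 → g i = 0)) with hZ1
    have hZ1card : Z1.card = q ^ n * q ^ (n * l) := by
      rw [hZ1, Finset.card_product, Finset.card_univ, card_vanish T1 R1 hRT1,
        Fintype.card_fun, Fintype.card_fin, hq, hT1card, hR1card]
      have harith : m - d - (m - u) = l := by omega
      rw [harith]
    have hmaster := MRD_master q d hq hd1 hdm CF hdistF hcardF x0 T1 hT1card j0 hj0T1 hx0j0 Z1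
    have hfeq : CF.filter (fun A =>
        ((Matrix.vecMul x0 A, fun (i : ↥T1) (c : Fin n) => A i c) :
          (Fin n → Fq) × (↥T1 → Fin n → Fq)) ∈ Z1) = F1 := by
      rw [hF1]
      apply Finset.filter_congr
      intro A _
      rw [hZ1]
      simp only [Finset.mem_product, Finset.mem_univ, true_and, Finset.mem_filter]
      constructor
      · intro h i hi c
        exact congrFun (h ⟨i, hRT1 hi⟩ hi) c
      · intro h i hi
        funext c
        exact h i.1 hi c
    rw [hfeq] at hmaster
    rw [hmaster, hZ1card]
  -- the set of relation vectors
  set X : Finset (Fin m → Fq) :=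
    Finset.univ.filter (fun x : Fin m → Fq =>
      x ≠ 0 ∧ ∀ i : Fin m, u ≤ (i : ℕ) → x i = 0) with hX
  -- count of each relation filter
  have hcount2 : ∀ x ∈ X,
      (CF.filter (fun A => Matrix.vecMul x A = 0 ∧
        ∀ i ∈ R1, ∀ c : Fin n, A i c = 0)).card = q ^ (n * l) := by
    intro x hx
    rw [hX, Finset.mem_filter] at hx
    obtain ⟨-, hxne, hxsupp⟩ := hx
    obtain ⟨j, hxj⟩ : ∃ j, x j ≠ 0 := by
      by_contra h
      push_neg at h
      exact hxne (funext h)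
    have hjlt : (j : ℕ) < u := by
      by_contra h
      exact hxj (hxsupp j (not_lt.mp h))
    have hR1sub : R1 ⊆ Finset.univ.erase j := by
      intro i hi
      rw [Finset.mem_erase]
      refine ⟨?_, Finset.mem_univ _⟩
      have hi2 : u ≤ (i : ℕ) := (hR1mem i).mp hi
      intro h
      rw [h] at hi2
      omega
    obtain ⟨T2, hRT2, hT2sub, hT2card⟩ :=
      Finset.exists_subsuperset_card_eq (n := m - d) hR1sub
        (by rw [hR1card]; omega)
        (by rw [Finset.card_erase_of_mem (Finset.mem_univ _), Finset.card_univ,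
              Fintype.card_fin]; omega)
    have hjT2 : j ∉ T2 := fun h => by
      have := hT2sub h
      rw [Finset.mem_erase] at this
      exact this.1 rfl
    set Z2 : Finset ((Fin n → Fq) × (↥T2 → Fin n → Fq)) :=
      ({(0 : Fin n → Fq)} : Finset (Fin n → Fq)) ×ˢ
        (Finset.univ.filter (fun g : ↥T2 → (Fin n → Fq) =>
          ∀ i : ↥T2, (i : Fin m) ∈ R1 → g i = 0)) with hZ2
    have hZ2card : Z2.card = q ^ (n * l) := by
      rw [hZ2, Finset.card_product, Finset.card_singleton, one_mul,
        card_vanish T2 R1 hRT2, hq, hT2card, hR1card]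
      have harith : m - d - (m - u) = l := by omega
      rw [harith]
    have hmaster := MRD_master q d hq hd1 hdm CF hdistF hcardF x T2 hT2card j hjT2 hxj Z2
    have hfeq : CF.filter (fun A =>
        ((Matrix.vecMul x A, fun (i : ↥T2) (c : Fin n) => A i c) :
          (Fin n → Fq) × (↥T2 → Fin n → Fq)) ∈ Z2) =
        CF.filter (fun A => Matrix.vecMul x A = 0 ∧
          ∀ i ∈ R1, ∀ c : Fin n, A i c = 0) := by
      apply Finset.filter_congr
      intro A _
      rw [hZ2]
      simp only [Finset.mem_product, Finset.mem_singleton, Finset.mem_filter,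
        Finset.mem_univ, true_and]
      constructor
      · rintro ⟨h0, h⟩
        refine ⟨h0, fun i hi c => congrFun (h ⟨i, hRT2 hi⟩ hi) c⟩
      · rintro ⟨h0, h⟩
        exact ⟨h0, fun i hi => funext (fun c => h i.1 hi c)⟩
    rw [hfeq] at hmaster
    rw [hmaster, hZ2card]
  -- bound on the number of relation vectors
  have hXcard : X.card ≤ q ^ u - 1 := by
    set ρ : (Fin m → Fq) → (↥Su → Fq) := fun x i => x i.1 with hρ
    have hinj : Set.InjOn ρ (X : Set (Fin m → Fq)) := by
      intro x hxmem y hymem hxy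
      rw [Finset.mem_coe, hX, Finset.mem_filter] at hxmem hymem
      funext i
      by_cases hi : i ∈ Su
      · exact congrFun hxy ⟨i, hi⟩
      · have hi2 : u ≤ (i : ℕ) := by
          rw [hSu] at hi
          simpa [not_lt] using hi
        rw [hxmem.2.2 i hi2, hymem.2.2 i hi2]
    have hsub : X.image ρ ⊆ Finset.univ.erase 0 := by
      intro g hg
      obtain ⟨x, hxmem, rfl⟩ := Finset.mem_image.mp hg
      rw [hX, Finset.mem_filter] at hxmem
      rw [Finset.mem_erase]
      refine ⟨?_, Finset.mem_univ _⟩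
      intro h0
      apply hxmem.2.1
      funext i
      by_cases hi : i ∈ Su
      · exact congrFun h0 ⟨i, hi⟩
      · have hi2 : u ≤ (i : ℕ) := by
          rw [hSu] at hi
          simpa [not_lt] using hi
        exact hxmem.2.2 i hi2
    have h1 : X.card = (X.image ρ).card := (Finset.card_image_of_injOn hinj).symm
    have h2 : (X.image ρ).card ≤ (Finset.univ.erase (0 : ↥Su → Fq)).card :=
      Finset.card_le_card hsub
    rw [h1]
    refine le_trans h2 ?_
    rw [Finset.card_erase_of_mem (Finset.mem_univ _), Finset.card_univ,
      Fintype.card_fun, Fintype.card_coe, hSucard, hq]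
  -- main contradiction argument
  by_contra hcon
  push_neg at hcon
  have hcover : F1 ⊆ X.biUnion (fun x => CF.filter (fun A => Matrix.vecMul x A = 0 ∧
      ∀ i ∈ R1, ∀ c : Fin n, A i c = 0)) := by
    intro A hA
    rw [hF1, Finset.mem_filter] at hA
    obtain ⟨hACF, hArows⟩ := hA
    have hAC : A ∈ C := (hmemCF A).mp hACF
    have hrankle : A.rank ≤ u := by
      have := rank_le_of_rows_subset A Su (fun i hi => by
        funext c
        refine hArows i ?_ c
        rw [hR1mem]
        rw [hSu] at hi
        simpa [not_lt] using hi)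
      rwa [hSucard] at this
    have hrankne : A.rank ≠ u := by
      intro h
      exact hcon A hAC (by rw [h, hu])
    have hranklt : A.rank < u := lt_of_le_of_ne hrankle hrankne
    set v : ↥Su → (Fin n → Fq) := fun i => A i.1 with hv
    have hnli : ¬ LinearIndependent Fq v := by
      intro hli
      have hcardeq := linearIndependent_iff_card_eq_finrank_span.mp hli
      rw [Set.finrank] at hcardeq
      have hle : Submodule.span Fq (Set.range v) ≤ Submodule.span Fq (Set.range A) :=
        Submodule.span_mono (by rintro _ ⟨i, rfl⟩; exact ⟨i.1, rfl⟩)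
      have hmono := Submodule.finrank_mono (R := Fq) hle
      rw [show Submodule.span Fq (Set.range A) = Submodule.span Fq (Set.range A.row) from rfl,
        ← Matrix.rank_eq_finrank_span_row A] at hmono
      rw [← hcardeq, Fintype.card_coe, hSucard] at hmono
      omega
    obtain ⟨g, hgsum, i0, hgi0⟩ := Fintype.not_linearIndependent_iff.mp hnli
    set x : Fin m → Fq := fun i => if h : i ∈ Su then g ⟨i, h⟩ else 0 with hx
    have hxX : x ∈ X := by
      rw [hX, Finset.mem_filter]
      refine ⟨Finset.mem_univ _, ?_, ?_⟩
      · intro h0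
        apply hgi0
        have := congrFun h0 i0.1
        simpa [hx, i0.2] using this
      · intro i hi
        have hni : i ∉ Su := by
          rw [hSu]
          simp only [Finset.mem_filter, Finset.mem_univ, true_and, not_lt]
          exact hi
        simp [hx, hni]
    have hvec : Matrix.vecMul x A = 0 := by
      funext c
      have hs := congrFun hgsum c
      rw [Finset.sum_apply] at hs
      simp only [Pi.smul_apply, smul_eq_mul, hv] at hs
      show (Matrix.vecMul x A) c = 0
      rw [Matrix.vecMul, dotProduct]
      calc ∑ i : Fin m, x i * A i c
          = ∑ i ∈ Su, x i * A i c := by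
            refine (Finset.sum_subset (Finset.subset_univ Su) ?_).symm
            intro i _ hi
            simp [hx, hi]
        _ = ∑ i : ↥Su, x i.1 * A i.1 c := (Finset.sum_coe_sort Su _).symm
        _ = ∑ i : ↥Su, g i * A i.1 c := by
            apply Finset.sum_congr rfl
            intro i _
            simp [hx, i.2]
        _ = 0 := hs
    exact Finset.mem_biUnion.mpr ⟨x, hxX,
      Finset.mem_filter.mpr ⟨hACF, hvec, hArows⟩⟩
  have hbound : F1.card ≤ X.card * q ^ (n * l) := by
    refine le_trans (Finset.card_le_card hcover) ?_
    refine le_trans (Finset.card_biUnion_le) ?_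
    exact le_of_eq (Finset.sum_const_nat hcount2)
  have hqn : q ^ u ≤ q ^ n := Nat.pow_le_pow_right (by omega) (le_trans hum hmn)
  have hpos : 0 < q ^ (n * l) := Nat.pow_pos (by omega)
  have hfinal : q ^ n * q ^ (n * l) ≤ (q ^ u - 1) * q ^ (n * l) := by
    rw [← hF1card]
    exact le_trans hbound (Nat.mul_le_mul_right _ hXcard)
  have : q ^ u - 1 < q ^ n := by
    have : 0 < q ^ u := Nat.pow_pos (by omega)
    omega
  have hlt := (Nat.mul_lt_mul_right hpos).mpr this
  exact lt_irrefl _ (lt_of_le_of_lt hfinal hlt)
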